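/- If the policy set Π̂ contains an optimal policy π*, then the fixed point of the Multi-Step Optimality Operator equals Q*: Q*_{B_Π̂^N} = Q*. -/

import Mathlib

open Finset Filter Topology

/-- A transition kernel: for each state-action pair, a probability distribution over states. -/
def IsKernel {S A : Type*} [Fintype S] (P : S × A → S → ℝ) : Prop :=
  ∀ p, (∀ s', 0 ≤ P p s') ∧ ∑ s', P p s' = 1

/-- A (stochastic) policy: for each state, a probability distribution over actions. -/
def IsPolicy {S A : Type*} [Fintype A] (π : S → A → ℝ) : Prop :=
  ∀ s, (∀ a, 0 ≤ π s a) ∧ ∑ a, π s a = 1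

/-- Bellman optimality operator: (B Q)(s,a) = r(s,a) + γ ∑_{s'} P(s'|s,a) max_{a'} Q(s',a'). -/
noncomputable def bOpt {S A : Type*} [Fintype S] [Fintype A] [Nonempty A]
    (P : S × A → S → ℝ) (r : S × A → ℝ) (γ : ℝ) (Q : S × A → ℝ) : S × A → ℝ :=
  fun p => r p + γ * ∑ s', P p s' * (univ.sup' univ_nonempty fun a' => Q (s', a'))

/-- Bellman expectation operator for policy π:
    (B^π Q)(s,a) = r(s,a) + γ ∑_{s'} P(s'|s,a) ∑_{a'} π(a'|s') Q(s',a'). -/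
noncomputable def bExp {S A : Type*} [Fintype S] [Fintype A]
    (P : S × A → S → ℝ) (r : S × A → ℝ) (γ : ℝ) (π : S → A → ℝ) (Q : S × A → ℝ) :
    S × A → ℝ :=
  fun p => r p + γ * ∑ s', P p s' * ∑ a', π s' a' * Q (s', a')

/-- Greedy Multi-Step Bellman Operator: G Q = max_{π ∈ Π̂} max_{1 ≤ n ≤ N} (B^π)^{n-1} B Q,
    componentwise, over a finite nonempty policy set indexed by ι. -/
noncomputable def gOp {S A : Type*} [Fintype S] [Fintype A] [Nonempty A]
    (P : S × A → S → ℝ) (r : S × A → ℝ) (γ : ℝ)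
    {ι : Type*} [Fintype ι] [Nonempty ι] (pol : ι → S → A → ℝ)
    (N : ℕ) (hN : 1 ≤ N) (Q : S × A → ℝ) : S × A → ℝ :=
  fun p => univ.sup' univ_nonempty fun i =>
    (Icc 1 N).sup' (nonempty_Icc.mpr hN) fun n =>
      ((bExp P r γ (pol i))^[n - 1] (bOpt P r γ Q)) p

/-- Multi-Step Optimality Operator: B Q = max over policies of (B^pi)^[N-1] (bOpt Q),
    i.e. roll out the policy for N steps and bootstrap the last step with a max. -/
noncomputable def mOp {S A : Type*} [Fintype S] [Fintype A] [Nonempty A]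
    (P : S × A → S → ℝ) (r : S × A → ℝ) (γ : ℝ)
    {ι : Type*} [Fintype ι] [Nonempty ι] (pol : ι → S → A → ℝ)
    (N : ℕ) (Q : S × A → ℝ) : S × A → ℝ :=
  fun p => Finset.univ.sup' Finset.univ_nonempty fun i =>
    ((bExp P r γ (pol i))^[N - 1] (bOpt P r γ Q)) p

section Aux

lemma my_sup'_le_sup'_add {α : Type*} [Fintype α] [Nonempty α] {f g : α → ℝ} {C : ℝ}
    (h : ∀ i, f i ≤ g i + C) :
    univ.sup' univ_nonempty f ≤ univ.sup' univ_nonempty g + C := by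
  apply Finset.sup'_le
  intro i _
  exact le_trans (h i) (add_le_add_left (Finset.le_sup' g (mem_univ i)) C)

lemma my_abs_sup'_sub_sup'_le {α : Type*} [Fintype α] [Nonempty α] {f g : α → ℝ} {C : ℝ}
    (h : ∀ i, |f i - g i| ≤ C) :
    |univ.sup' univ_nonempty f - univ.sup' univ_nonempty g| ≤ C := by
  rw [abs_sub_le_iff]
  constructor
  · have := my_sup'_le_sup'_add (f := f) (g := g) (C := C)
      (fun i => by have := (abs_le.mp (h i)).2; linarith)
    linarith
  · have := my_sup'_le_sup'_add (f := g) (g := f) (C := C)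
      (fun i => by have := (abs_le.mp (h i)).1; linarith)
    linarith

lemma my_abs_weighted_le {α : Type*} [Fintype α] {w x : α → ℝ} {C : ℝ}
    (hw : ∀ i, 0 ≤ w i) (hw1 : ∑ i, w i = 1) (hx : ∀ i, |x i| ≤ C) :
    |∑ i, w i * x i| ≤ C := by
  calc |∑ i, w i * x i| ≤ ∑ i, |w i * x i| := Finset.abs_sum_le_sum_abs _ _
    _ ≤ ∑ i, w i * C := Finset.sum_le_sum (fun i _ => by
        rw [abs_mul, abs_of_nonneg (hw i)]
        exact mul_le_mul_of_nonneg_left (hx i) (hw i))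
    _ = C := by rw [← Finset.sum_mul, hw1, one_mul]

lemma my_weighted_le_sup' {α : Type*} [Fintype α] [Nonempty α] {w x : α → ℝ}
    (hw : ∀ i, 0 ≤ w i) (hw1 : ∑ i, w i = 1) :
    ∑ i, w i * x i ≤ univ.sup' univ_nonempty x := by
  calc ∑ i, w i * x i ≤ ∑ i, w i * (univ.sup' univ_nonempty x) :=
      Finset.sum_le_sum fun i _ => mul_le_mul_of_nonneg_left (Finset.le_sup' x (mem_univ i)) (hw i)
    _ = _ := by rw [← Finset.sum_mul, hw1, one_mul]

section MDP
variable {S A : Type*} [Fintype S] [Fintype A] [Nonempty A]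
  {P : S × A → S → ℝ} {r : S × A → ℝ} {γ : ℝ}

lemma my_bExp_lip (hγ : 0 ≤ γ) (hP : IsKernel P) {π : S → A → ℝ} (hπ : IsPolicy π)
    {Q1 Q2 : S × A → ℝ} {C : ℝ} (hC : ∀ p, |Q1 p - Q2 p| ≤ C) :
    ∀ p, |bExp P r γ π Q1 p - bExp P r γ π Q2 p| ≤ γ * C := by
  intro p
  have key : bExp P r γ π Q1 p - bExp P r γ π Q2 p
      = γ * ∑ s', P p s' * ∑ a', π s' a' * (Q1 (s', a') - Q2 (s', a')) := by
    simp only [bExp, mul_sub, Finset.sum_sub_distrib]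
    ring
  rw [key, abs_mul, abs_of_nonneg hγ]
  refine mul_le_mul_of_nonneg_left ?_ hγ
  refine my_abs_weighted_le (fun s' => (hP p).1 s') (hP p).2 (fun s' => ?_)
  exact my_abs_weighted_le (fun a' => (hπ s').1 a') (hπ s').2 (fun a' => hC _)

lemma my_bOpt_lip (hγ : 0 ≤ γ) (hP : IsKernel P)
    {Q1 Q2 : S × A → ℝ} {C : ℝ} (hC : ∀ p, |Q1 p - Q2 p| ≤ C) :
    ∀ p, |bOpt P r γ Q1 p - bOpt P r γ Q2 p| ≤ γ * C := by
  intro p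
  have key : bOpt P r γ Q1 p - bOpt P r γ Q2 p
      = γ * ∑ s', P p s' * ((univ.sup' univ_nonempty fun a' => Q1 (s', a'))
          - (univ.sup' univ_nonempty fun a' => Q2 (s', a'))) := by
    simp only [bOpt, mul_sub, Finset.sum_sub_distrib]
    ring
  rw [key, abs_mul, abs_of_nonneg hγ]
  refine mul_le_mul_of_nonneg_left ?_ hγ
  refine my_abs_weighted_le (fun s' => (hP p).1 s') (hP p).2 (fun s' => ?_)
  exact my_abs_sup'_sub_sup'_le (fun a' => hC _)

lemma my_bExp_mono (hγ : 0 ≤ γ) (hP : IsKernel P) {π : S → A → ℝ} (hπ : IsPolicy π)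
    {Q1 Q2 : S × A → ℝ} (h : ∀ p, Q1 p ≤ Q2 p) :
    ∀ p, bExp P r γ π Q1 p ≤ bExp P r γ π Q2 p := by
  intro p
  unfold bExp
  refine add_le_add_right (mul_le_mul_of_nonneg_left ?_ hγ) _
  refine Finset.sum_le_sum fun s' _ => mul_le_mul_of_nonneg_left ?_ ((hP p).1 s')
  exact Finset.sum_le_sum fun a' _ => mul_le_mul_of_nonneg_left (h _) ((hπ s').1 a')

lemma my_bExp_le_bOpt (hγ : 0 ≤ γ) (hP : IsKernel P) {π : S → A → ℝ} (hπ : IsPolicy π)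
    {Q : S × A → ℝ} : ∀ p, bExp P r γ π Q p ≤ bOpt P r γ Q p := by
  intro p
  unfold bExp bOpt
  refine add_le_add_right (mul_le_mul_of_nonneg_left ?_ hγ) _
  refine Finset.sum_le_sum fun s' _ => mul_le_mul_of_nonneg_left ?_ ((hP p).1 s')
  exact my_weighted_le_sup' (fun a' => (hπ s').1 a') (hπ s').2

lemma my_bExp_iter_le (hγ : 0 ≤ γ) (hP : IsKernel P) {π : S → A → ℝ} (hπ : IsPolicy π)
    {Qstar : S × A → ℝ} (hfix : ∀ p, bOpt P r γ Qstar p = Qstar p) (n : ℕ) :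
    ∀ p, ((bExp P r γ π)^[n] Qstar) p ≤ Qstar p := by
  induction n with
  | zero => simp
  | succ n ih =>
    intro p
    rw [Function.iterate_succ_apply']
    calc bExp P r γ π ((bExp P r γ π)^[n] Qstar) p
        ≤ bExp P r γ π Qstar p := my_bExp_mono hγ hP hπ ih p
      _ ≤ bOpt P r γ Qstar p := my_bExp_le_bOpt hγ hP hπ p
      _ = Qstar p := hfix p

lemma my_bExp_iter_lip (hγ : 0 ≤ γ) (hP : IsKernel P) {π : S → A → ℝ} (hπ : IsPolicy π)
    {F1 F2 : S × A → ℝ} {D : ℝ} (hD : ∀ p, |F1 p - F2 p| ≤ D) (n : ℕ) :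
    ∀ p, |((bExp P r γ π)^[n] F1) p - ((bExp P r γ π)^[n] F2) p| ≤ γ ^ n * D := by
  induction n with
  | zero => simpa using hD
  | succ n ih =>
    intro p
    rw [Function.iterate_succ_apply', Function.iterate_succ_apply']
    have := my_bExp_lip (r := r) hγ hP hπ ih p
    calc |bExp P r γ π ((bExp P r γ π)^[n] F1) p - bExp P r γ π ((bExp P r γ π)^[n] F2) p|
        ≤ γ * (γ ^ n * D) := this
      _ = γ ^ (n + 1) * D := by ring

end MDP

end Aux

/-- if the policy set contains an optimal policy π*, then the fixed point
    of the Multi-Step Optimality Operator equals Q*. -/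
theorem multistep_optimality_fixed_point_eq_of_optimal_mem
    {S A : Type*} [Fintype S] [Fintype A] [Nonempty S] [Nonempty A]
    (P : S × A → S → ℝ) (r : S × A → ℝ) (γ : ℝ) (hγ0 : 0 < γ) (hγ1 : γ < 1)
    (hP : IsKernel P)
    {ι : Type*} [Fintype ι] [Nonempty ι]
    (pol : ι → S → A → ℝ) (hpol : ∀ i, IsPolicy (pol i))
    (N : ℕ) (hN : 1 ≤ N)
    (Qstar : S × A → ℝ) (hQ : bOpt P r γ Qstar = Qstar)
    (πstar : S → A → ℝ) (hπstar : IsPolicy πstar)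
    (hopt : bExp P r γ πstar Qstar = Qstar)
    (hmem : ∃ i, pol i = πstar)
    (Qfix : S × A → ℝ) (hQfix : mOp P r γ pol N Qfix = Qfix) :
    Qfix = Qstar := by
  classical
  obtain ⟨i0, hi0⟩ := hmem
  have hfixQ : ∀ p, bOpt P r γ Qstar p = Qstar p := fun p => congrFun hQ p
  -- Qstar is a fixed point of mOp
  have hmQ : ∀ p, mOp P r γ pol N Qstar p = Qstar p := by
    intro p
    apply le_antisymm
    · apply Finset.sup'_le
      intro i _
      rw [hQ]
      exact my_bExp_iter_le hγ0.le hP (hpol i) hfixQ (N - 1) p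
    · have h1 : ((bExp P r γ (pol i0))^[N - 1] (bOpt P r γ Qstar)) p = Qstar p := by
        rw [hQ, hi0, Function.iterate_fixed hopt]
      calc Qstar p = _ := h1.symm
        _ ≤ _ := Finset.le_sup'
            (fun i => ((bExp P r γ (pol i))^[N - 1] (bOpt P r γ Qstar)) p) (mem_univ i0)
  -- contraction argument
  set C : ℝ := univ.sup' univ_nonempty (fun p : S × A => |Qfix p - Qstar p|) with hCdef
  have hC : ∀ p, |Qfix p - Qstar p| ≤ C := fun p =>
    Finset.le_sup' (fun q : S × A => |Qfix q - Qstar q|) (mem_univ p)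
  have hC0 : 0 ≤ C := le_trans (abs_nonneg _) (hC (Classical.arbitrary _))
  have hbound : ∀ p : S × A, |Qfix p - Qstar p| ≤ γ ^ N * C := by
    intro p
    have hD : ∀ q, |bOpt P r γ Qfix q - bOpt P r γ Qstar q| ≤ γ * C :=
      my_bOpt_lip hγ0.le hP hC
    have hiter : ∀ i (q : S × A),
        |((bExp P r γ (pol i))^[N - 1] (bOpt P r γ Qfix)) q
          - ((bExp P r γ (pol i))^[N - 1] (bOpt P r γ Qstar)) q| ≤ γ ^ (N - 1) * (γ * C) :=
      fun i => my_bExp_iter_lip hγ0.le hP (hpol i) hD (N - 1)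
    have hsup : |mOp P r γ pol N Qfix p - mOp P r γ pol N Qstar p| ≤ γ ^ (N - 1) * (γ * C) :=
      my_abs_sup'_sub_sup'_le (fun i => hiter i p)
    have heq : γ ^ (N - 1) * (γ * C) = γ ^ N * C := by
      rw [← mul_assoc, ← pow_succ, Nat.sub_add_cancel hN]
    rw [congrFun hQfix p, hmQ p] at hsup
    rw [← heq]
    exact hsup
  have hCle : C ≤ γ ^ N * C := Finset.sup'_le _ _ (fun p _ => hbound p)
  have hγN : γ ^ N < 1 := pow_lt_one₀ hγ0.le hγ1 (by omega)
  have hCzero : C ≤ 0 := by nlinarith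
  funext p
  have h0 : |Qfix p - Qstar p| ≤ 0 := le_trans (hC p) hCzero
  have := abs_nonpos_iff.mp h0
  linarith [sub_eq_zero.mp this]
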